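/- Suppose that for every λ ≥ 0, φ^λ = (w^λ, b^λ) is a λ-regularized upper envelope. Then for every λ > 0 one has ‖w^λ‖² ≤ H*/λ, and consequently w^λ → 0 in W as λ → ∞. -/

import Mathlib

theorem stmt_2
    {W : Type*} [NormedAddCommGroup W] [NormedSpace ℝ W]
    {S : Type*}
    (f : W → S → ℝ)
    (hf_cont : ∀ s : S, Continuous fun w => f w s)
    (hf_zero : ∀ s : S, f 0 s = 0)
    (m : ℕ) (hm : 0 < m)
    (s : Fin m → S) (G : Fin m → ℝ)
    (Gstar : ℝ)
    (hGstar : Gstar = Finset.univ.sup' ⟨⟨0, hm⟩, Finset.mem_univ _⟩ G)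
    (Hstar : ℝ)
    (hHstar : Hstar = ∑ i, (Gstar - G i) ^ 2)
    (φ : ℝ → W × ℝ)
    (hfeas : ∀ lam : ℝ, 0 ≤ lam → ∀ i : Fin m, G i ≤ f (φ lam).1 (s i) + (φ lam).2)
    (hmin : ∀ lam : ℝ, 0 ≤ lam → ∀ ψ : W × ℝ,
      (∀ i : Fin m, G i ≤ f ψ.1 (s i) + ψ.2) →
      (∑ i, (f (φ lam).1 (s i) + (φ lam).2 - G i) ^ 2) + lam * ‖(φ lam).1‖ ^ 2 ≤
        (∑ i, (f ψ.1 (s i) + ψ.2 - G i) ^ 2) + lam * ‖ψ.1‖ ^ 2) :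
    (∀ lam : ℝ, 0 < lam → ‖(φ lam).1‖ ^ 2 ≤ Hstar / lam)
    ∧ Filter.Tendsto (fun lam : ℝ => (φ lam).1) Filter.atTop (nhds 0) := by
  have hfeas0 : ∀ i : Fin m, G i ≤ f (0 : W) (s i) + Gstar := by
    intro i
    rw [hf_zero, hGstar]
    simpa using Finset.le_sup' G (Finset.mem_univ i)
  have key : ∀ lam : ℝ, 0 ≤ lam → lam * ‖(φ lam).1‖ ^ 2 ≤ Hstar := by
    intro lam hlam
    have h := hmin lam hlam (0, Gstar) hfeas0
    have hnn : (0:ℝ) ≤ ∑ i, (f (φ lam).1 (s i) + (φ lam).2 - G i) ^ 2 :=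
      Finset.sum_nonneg fun i _ => sq_nonneg _
    simp only [hf_zero, norm_zero] at h
    have : lam * ‖(φ lam).1‖ ^ 2 ≤ ∑ i, (0 + Gstar - G i) ^ 2 + lam * 0 ^ 2 := by
      linarith
    simpa [hHstar] using this
  have hbound : ∀ lam : ℝ, 0 < lam → ‖(φ lam).1‖ ^ 2 ≤ Hstar / lam := by
    intro lam hlam
    rw [le_div_iff₀ hlam]
    have := key lam hlam.le
    linarith [this]
  refine ⟨hbound, ?_⟩
  rw [tendsto_zero_iff_norm_tendsto_zero]
  have hHnn : 0 ≤ Hstar := hHstar ▸ Finset.sum_nonneg fun i _ => sq_nonneg _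
  have hsq : Filter.Tendsto (fun lam : ℝ => Real.sqrt (Hstar / lam))
      Filter.atTop (nhds 0) := by
    have : Filter.Tendsto (fun lam : ℝ => Hstar / lam) Filter.atTop (nhds 0) :=
      tendsto_const_nhds.div_atTop Filter.tendsto_id
    simpa [Function.comp_def] using (Real.continuous_sqrt.tendsto 0).comp this
  refine squeeze_zero' ?_ ?_ hsq
  · exact Filter.Eventually.of_forall fun _ => norm_nonneg _
  · filter_upwards [Filter.eventually_gt_atTop 0] with lam hlam
    have h := hbound lam hlam
    have := Real.sqrt_le_sqrt h
    rwa [Real.sqrt_sq (norm_nonneg _)] at this
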